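/- Let N ≥ 2, let ε ≥ 0 satisfy N²ε < 1, let ψ_1, …, ψ_N be unit vectors in ℂ^d, and let e_1, …, e_N be an orthonormal family in ℂ^d such that ‖ψ_i ψ_i* − e_i e_i*‖ ≤ ε for every i, where ‖·‖ is the ℓ²→ℓ² operator norm on matrices. Then W := Σ_{i=1}^N ψ_i ψ_i* satisfies: every eigenvalue of W is at most 1 + Nε, and every nonzero eigenvalue of W is at least 1 − N²ε. Consequently λ_max(W)/λ_min⁺(W) ≤ (1 + Nε)/(1 − N²ε); in particular, if ε = 1/(2N²), then λ_max(W)/λ_min⁺(W) ≤ 3. -/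

import Mathlib

set_option maxHeartbeats 1000000

open Matrix Finset
open scoped ComplexOrder ComplexInnerProductSpace

private lemma vmv_mulVec {d : ℕ} (w v u : Fin d → ℂ) :
    (vecMulVec w v) *ᵥ u = (v ⬝ᵥ u) • w := by
  ext i
  simp [vecMulVec, mulVec, dotProduct, Finset.mul_sum, mul_assoc, mul_comm, mul_left_comm]

private lemma inner_eq_dot {d : ℕ} (x y : EuclideanSpace ℂ (Fin d)) :
    ⟪x, y⟫ = star (x : Fin d → ℂ) ⬝ᵥ (y : Fin d → ℂ) := by
  rw [EuclideanSpace.inner_eq_star_dotProduct, dotProduct_comm]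

private lemma norm_one_of_dot {d : ℕ} (x : EuclideanSpace ℂ (Fin d))
    (h : star (x : Fin d → ℂ) ⬝ᵥ (x : Fin d → ℂ) = 1) : ‖x‖ = 1 := by
  have h1 : (⟪x, x⟫ : ℂ) = (‖x‖ : ℂ) ^ 2 := inner_self_eq_norm_sq_to_K x
  rw [inner_eq_dot, h] at h1
  have h2 : (‖x‖ : ℝ) ^ 2 = 1 := by exact_mod_cast h1.symm
  calc ‖x‖ = Real.sqrt (‖x‖ ^ 2) := (Real.sqrt_sq (norm_nonneg x)).symm
    _ = 1 := by rw [h2, Real.sqrt_one]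

private def toE {d : ℕ} (x : Fin d → ℂ) : EuclideanSpace ℂ (Fin d) := WithLp.toLp 2 x

private lemma dot_sum {d N : ℕ} (x : Fin d → ℂ) (f : Fin N → Fin d → ℂ) :
    x ⬝ᵥ (∑ i, f i) = ∑ i, x ⬝ᵥ f i := by
  simp only [dotProduct, Finset.sum_apply, Finset.mul_sum]
  exact Finset.sum_comm

private lemma sum_dot {d N : ℕ} (f : Fin N → Fin d → ℂ) (y : Fin d → ℂ) :
    (∑ i, f i) ⬝ᵥ y = ∑ i, f i ⬝ᵥ y := by
  simp only [dotProduct, Finset.sum_apply, Finset.sum_mul]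
  exact Finset.sum_comm

private lemma sum_mulVec' {d N : ℕ} (M : Fin N → Matrix (Fin d) (Fin d) ℂ) (u : Fin d → ℂ) :
    (∑ i, M i) *ᵥ u = ∑ i, M i *ᵥ u := by
  induction (Finset.univ : Finset (Fin N)) using Finset.induction with
  | empty => simp [Matrix.zero_mulVec]
  | insert _ _ h ih => simp [Finset.sum_insert h, Matrix.add_mulVec, ih]

private lemma key {d N : ℕ} (hN : 2 ≤ N) (ε : ℝ) (hε : 0 ≤ ε)
    (hNε : (N : ℝ) ^ 2 * ε < 1)
    (ψ e : Fin N → (Fin d → ℂ))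
    (hψ : ∀ i, star (ψ i) ⬝ᵥ ψ i = 1)
    (he : ∀ i j, star (e i) ⬝ᵥ e j = if i = j then 1 else 0)
    (hclose : ∀ i, ∀ u : EuclideanSpace ℂ (Fin d),
      ‖Matrix.toEuclideanLin
          (Matrix.vecMulVec (ψ i) (star (ψ i)) - Matrix.vecMulVec (e i) (star (e i))) u‖
        ≤ ε * ‖u‖)
    (W : Matrix (Fin d) (Fin d) ℂ)
    (hW : W = ∑ i, Matrix.vecMulVec (ψ i) (star (ψ i)))
    (v : EuclideanSpace ℂ (Fin d)) (hv : ‖v‖ = 1) (lam : ℝ)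
    (hlam : W *ᵥ (v : Fin d → ℂ) = lam • (v : Fin d → ℂ)) :
    lam ≤ 1 + N * ε ∧ (lam ≠ 0 → 1 - (N : ℝ) ^ 2 * ε ≤ lam) := by
  classical
  set D : Fin N → Matrix (Fin d) (Fin d) ℂ :=
    fun i => Matrix.vecMulVec (ψ i) (star (ψ i)) - Matrix.vecMulVec (e i) (star (e i)) with hD
  have hcl : ∀ i (u : EuclideanSpace ℂ (Fin d)),
      ‖toE (D i *ᵥ (u : Fin d → ℂ))‖ ≤ ε * ‖u‖ := by
    intro i u
    have h := hclose i u
    rw [Matrix.toEuclideanLin_apply] at h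
    exact h
  have hψn : ∀ i, ‖toE (ψ i)‖ = 1 := fun i => norm_one_of_dot (toE (ψ i)) (by simpa [toE] using hψ i)
  have hen : ∀ i, ‖toE (e i)‖ = 1 := fun i => norm_one_of_dot (toE (e i)) (by simpa [toE] using he i i)
  have hvv : star (v : Fin d → ℂ) ⬝ᵥ (v : Fin d → ℂ) = 1 := by
    rw [← inner_eq_dot, inner_self_eq_norm_sq_to_K, hv]; norm_num
  set a : Fin N → ℂ := fun i => star (ψ i) ⬝ᵥ (v : Fin d → ℂ) with ha
  set b : Fin N → ℂ := fun i => star (e i) ⬝ᵥ (v : Fin d → ℂ) with hb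
  have hsmul : lam • (v : Fin d → ℂ) = (lam : ℂ) • (v : Fin d → ℂ) := by
    ext j; simp [Complex.real_smul]
  have hWv : W *ᵥ (v : Fin d → ℂ) = ∑ i, a i • ψ i := by
    rw [hW, sum_mulVec']
    exact Finset.sum_congr rfl fun i _ => vmv_mulVec _ _ _
  have hconj : ∀ i, star (v : Fin d → ℂ) ⬝ᵥ ψ i = star (a i) := by
    intro i; exact star_dotProduct _ _
  -- lam = ∑ ‖a i‖²
  have hlamC : (lam : ℂ) = ∑ i, (‖a i‖ : ℂ) ^ 2 := by
    have h1 : star (v : Fin d → ℂ) ⬝ᵥ (W *ᵥ (v : Fin d → ℂ)) = (lam : ℂ) := by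
      rw [hlam, hsmul, dotProduct_smul, hvv]; simp
    have h2 : star (v : Fin d → ℂ) ⬝ᵥ (W *ᵥ (v : Fin d → ℂ)) = ∑ i, (‖a i‖ : ℂ) ^ 2 := by
      rw [hWv, dot_sum]
      refine Finset.sum_congr rfl fun i _ => ?_
      rw [dotProduct_smul, hconj i]
      simp only [smul_eq_mul]
      rw [show star (a i) = (starRingEnd ℂ) (a i) from rfl, RCLike.mul_conj]
      norm_cast
    rw [← h2, h1]
  have hlamR : lam = ∑ i, ‖a i‖ ^ 2 := by exact_mod_cast hlamC
  have hconjb : ∀ i, star (v : Fin d → ℂ) ⬝ᵥ e i = star (b i) := by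
    intro i; exact star_dotProduct _ _
  -- upper bound
  have hub_i : ∀ i, ‖a i‖ ^ 2 ≤ ‖b i‖ ^ 2 + ε := by
    intro i
    have hDv : D i *ᵥ (v : Fin d → ℂ) = a i • ψ i - b i • e i := by
      rw [hD]
      rw [Matrix.sub_mulVec, vmv_mulVec, vmv_mulVec]
    have hdot : star (v : Fin d → ℂ) ⬝ᵥ (D i *ᵥ (v : Fin d → ℂ))
        = ((‖a i‖ ^ 2 - ‖b i‖ ^ 2 : ℝ) : ℂ) := by
      rw [hDv, dotProduct_sub, dotProduct_smul, dotProduct_smul, hconj i, hconjb i]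
      simp only [smul_eq_mul]
      rw [show star (a i) = (starRingEnd ℂ) (a i) from rfl,
          show star (b i) = (starRingEnd ℂ) (b i) from rfl,
          RCLike.mul_conj, RCLike.mul_conj]
      norm_cast
    have hcs : ‖star (v : Fin d → ℂ) ⬝ᵥ (D i *ᵥ (v : Fin d → ℂ))‖ ≤ ε := by
      have h1 : ‖(⟪v, toE (D i *ᵥ (v : Fin d → ℂ))⟫ : ℂ)‖ ≤ ‖v‖ * ‖toE (D i *ᵥ (v : Fin d → ℂ))‖ :=
        norm_inner_le_norm _ _
      have h2 := hcl i v
      rw [hv] at h1 h2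
      calc ‖star (v : Fin d → ℂ) ⬝ᵥ (D i *ᵥ (v : Fin d → ℂ))‖
          = ‖(⟪v, toE (D i *ᵥ (v : Fin d → ℂ))⟫ : ℂ)‖ := by rw [inner_eq_dot]; rfl
        _ ≤ 1 * ‖toE (D i *ᵥ (v : Fin d → ℂ))‖ := h1
        _ ≤ 1 * (ε * 1) := by nlinarith [norm_nonneg (toE (D i *ᵥ (v : Fin d → ℂ)))]
        _ = ε := by ring
    rw [hdot] at hcs
    rw [Complex.norm_real] at hcs
    have := abs_le.mp hcs
    linarith [this.2]
  have horth : Orthonormal ℂ (fun i => toE (e i)) := by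
    rw [orthonormal_iff_ite]
    intro i j
    rw [inner_eq_dot]
    exact he i j
  have hbessel : (∑ i, ‖b i‖ ^ 2) ≤ 1 := by
    have h := horth.sum_inner_products_le (x := v) (s := Finset.univ)
    rw [hv] at h
    simp only [inner_eq_dot, one_pow] at h
    exact h
  have hub : lam ≤ 1 + N * ε := by
    rw [hlamR]
    calc (∑ i, ‖a i‖ ^ 2) ≤ ∑ i, (‖b i‖ ^ 2 + ε) := Finset.sum_le_sum fun i _ => hub_i i
      _ = (∑ i, ‖b i‖ ^ 2) + N * ε := by
          rw [Finset.sum_add_distrib]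
          simp [Finset.card_univ, mul_comm]
      _ ≤ 1 + N * ε := by linarith
  refine ⟨hub, fun hne => ?_⟩
  -- lower bound
  have hlam_nonneg : 0 ≤ lam := by rw [hlamR]; positivity
  have hlampos : 0 < lam := lt_of_le_of_ne hlam_nonneg (Ne.symm hne)
  set α : Fin N → ℂ := fun i => star (e i) ⬝ᵥ ψ i with hα'
  set r : Fin N → (Fin d → ℂ) := fun i => ψ i - α i • e i with hr'
  have hri : ∀ i, ‖toE (r i)‖ ≤ ε := by
    intro i
    have h := hcl i (toE (ψ i))
    rw [hψn i, mul_one] at h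
    have hDψ : D i *ᵥ ψ i = r i := by
      rw [hD]
      rw [Matrix.sub_mulVec, vmv_mulVec, vmv_mulVec, hψ i, one_smul, hr']
    rwa [show ((toE (ψ i) : EuclideanSpace ℂ (Fin d)) : Fin d → ℂ) = ψ i from rfl, hDψ] at h
  have hαb : ∀ i, ‖α i‖ ≤ 1 := by
    intro i
    have h := norm_inner_le_norm (𝕜 := ℂ) (toE (e i)) (toE (ψ i))
    rw [hen i, hψn i] at h
    rw [inner_eq_dot, mul_one] at h
    exact h
  have hdecomp : ∀ i, ψ i = α i • e i + r i := by
    intro i; ext j; simp [hr']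
  have hgram_diag : ∀ i, star (ψ i) ⬝ᵥ ψ i = 1 := hψ
  have hgram_off : ∀ i j, i ≠ j → ‖star (ψ i) ⬝ᵥ ψ j‖ ≤ 2 * ε + ε * ε := by
    intro i j hij
    have hexp : star (ψ i) ⬝ᵥ ψ j
        = star (α i) * α j * (star (e i) ⬝ᵥ e j) + star (α i) * (star (e i) ⬝ᵥ r j)
          + α j * (star (r i) ⬝ᵥ e j) + star (r i) ⬝ᵥ r j := by
      conv_lhs => rw [hdecomp i, hdecomp j]
      rw [star_add, star_smul, add_dotProduct, dotProduct_add, dotProduct_add,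
          smul_dotProduct, smul_dotProduct, dotProduct_smul, dotProduct_smul]
      simp only [smul_eq_mul]
      ring
    rw [hexp, he i j, if_neg hij, mul_zero, zero_add]
    have b1 : ‖star (α i) * (star (e i) ⬝ᵥ r j)‖ ≤ 1 * ε := by
      rw [norm_mul, norm_star]
      have h := norm_inner_le_norm (𝕜 := ℂ) (toE (e i)) (toE (r j))
      rw [hen i] at h
      have : ‖star (e i) ⬝ᵥ r j‖ ≤ 1 * ‖toE (r j)‖ := by rw [inner_eq_dot] at h; exact h
      nlinarith [hαb i, hri j, norm_nonneg (star (e i) ⬝ᵥ r j), norm_nonneg (α i),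
        norm_nonneg (toE (r j))]
    have b2 : ‖α j * (star (r i) ⬝ᵥ e j)‖ ≤ ε * 1 := by
      rw [norm_mul]
      have h := norm_inner_le_norm (𝕜 := ℂ) (toE (r i)) (toE (e j))
      rw [hen j] at h
      have h2 : ‖star (r i) ⬝ᵥ e j‖ ≤ ‖toE (r i)‖ * 1 := by rw [inner_eq_dot] at h; exact h
      nlinarith [hαb j, hri i, norm_nonneg (star (r i) ⬝ᵥ e j), norm_nonneg (α j),
        norm_nonneg (toE (r i))]
    have b3 : ‖star (r i) ⬝ᵥ r j‖ ≤ ε * ε := by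
      have h := norm_inner_le_norm (𝕜 := ℂ) (toE (r i)) (toE (r j))
      have h2 : ‖star (r i) ⬝ᵥ r j‖ ≤ ‖toE (r i)‖ * ‖toE (r j)‖ := by rw [inner_eq_dot] at h; exact h
      nlinarith [hri i, hri j, norm_nonneg (toE (r i)), norm_nonneg (toE (r j))]
    calc ‖star (α i) * (star (e i) ⬝ᵥ r j) + α j * (star (r i) ⬝ᵥ e j) + star (r i) ⬝ᵥ r j‖
        ≤ ‖star (α i) * (star (e i) ⬝ᵥ r j)‖ + ‖α j * (star (r i) ⬝ᵥ e j)‖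
          + ‖star (r i) ⬝ᵥ r j‖ := norm_add₃_le
      _ ≤ 1 * ε + ε * 1 + ε * ε := by linarith
      _ = 2 * ε + ε * ε := by ring
  -- Gram identity
  set c : ℝ := 2 * ε + ε * ε with hc'
  set f : Fin N → Fin N → ℂ := fun i j => star (a i) * a j * (star (ψ i) ⬝ᵥ ψ j) with hf'
  have hWv2C : ((lam : ℂ)) ^ 2 = ∑ i, ∑ j, f i j := by
    have h1 : star (W *ᵥ (v : Fin d → ℂ)) ⬝ᵥ (W *ᵥ (v : Fin d → ℂ)) = ((lam : ℂ)) ^ 2 := by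
      rw [hlam, hsmul, star_smul, smul_dotProduct, dotProduct_smul, hvv]
      simp [smul_eq_mul, Complex.star_def, Complex.conj_ofReal]
      ring
    have h2 : star (W *ᵥ (v : Fin d → ℂ)) ⬝ᵥ (W *ᵥ (v : Fin d → ℂ)) = ∑ i, ∑ j, f i j := by
      rw [hWv, star_sum, sum_dot]
      refine Finset.sum_congr rfl fun i _ => ?_
      rw [star_smul, smul_dotProduct, dot_sum]
      simp only [dotProduct_smul, smul_eq_mul, Finset.mul_sum, hf']
      exact Finset.sum_congr rfl fun j _ => by ring
    rw [← h1, h2]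
  have hre : lam ^ 2 = ∑ i, ∑ j, (f i j).re := by
    have h := congrArg Complex.re hWv2C
    rw [Complex.re_sum] at h
    simp only [Complex.re_sum] at h
    calc lam ^ 2 = ((lam : ℂ) ^ 2).re := by
          rw [show ((lam : ℂ)) ^ 2 = ((lam ^ 2 : ℝ) : ℂ) by push_cast; ring, Complex.ofReal_re]
      _ = ∑ i, ∑ j, (f i j).re := h
  have hdiag : ∀ i, (f i i).re = ‖a i‖ ^ 2 := by
    intro i
    simp only [hf']
    rw [hψ i, mul_one, show star (a i) = (starRingEnd ℂ) (a i) from rfl, RCLike.conj_mul]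
    norm_cast
  have hoff : ∀ i j, i ≠ j → -(‖a i‖ * ‖a j‖ * c) ≤ (f i j).re := by
    intro i j hij
    have h1 : ‖f i j‖ ≤ ‖a i‖ * ‖a j‖ * c := by
      simp only [hf']
      rw [norm_mul, norm_mul, norm_star]
      have hgo := hgram_off i j hij
      have h0 : (0 : ℝ) ≤ ‖a i‖ * ‖a j‖ := mul_nonneg (norm_nonneg _) (norm_nonneg _)
      exact mul_le_mul_of_nonneg_left hgo h0
    have h2 : |(f i j).re| ≤ ‖f i j‖ := by
      exact Complex.abs_re_le_norm _
    linarith [neg_abs_le ((f i j).re)]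
  set t : Fin N → ℝ := fun i => ‖a i‖ with ht'
  set T : ℝ := ∑ i, t i with hT'
  have hsq : T ^ 2 ≤ N * lam := by
    have := sq_sum_le_card_mul_sum_sq (s := (Finset.univ : Finset (Fin N))) (f := t)
    rw [hT', hlamR]
    simpa using this
  -- lower bound on lam^2
  have hmain : lam - c * (T ^ 2 - lam) ≤ lam ^ 2 := by
    have hstep : ∀ i, t i ^ 2 - c * (t i * (T - t i)) ≤ ∑ j, (f i j).re := by
      intro i
      have hsplit : ∑ j, (f i j).re
          = (f i i).re + ∑ j ∈ Finset.univ.erase i, (f i j).re :=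
        (Finset.add_sum_erase _ _ (Finset.mem_univ i)).symm
      rw [hsplit, hdiag i]
      have herase : ∑ j ∈ Finset.univ.erase i, (f i j).re
          ≥ ∑ j ∈ Finset.univ.erase i, (-(t i * t j * c)) := by
        refine Finset.sum_le_sum fun j hj => ?_
        exact hoff i j (Ne.symm (Finset.ne_of_mem_erase hj))
      have hesum : ∑ j ∈ Finset.univ.erase i, t j = T - t i := by
        have h := Finset.add_sum_erase (Finset.univ) t (Finset.mem_univ i)
        rw [hT']
        linarith
      have hsum2 : ∑ j ∈ Finset.univ.erase i, (-(t i * t j * c)) = -(c * (t i * (T - t i))) := by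
        have h1 : ∑ j ∈ Finset.univ.erase i, (-(t i * t j * c))
            = ∑ j ∈ Finset.univ.erase i, ((-(t i * c)) * t j) :=
          Finset.sum_congr rfl fun j _ => by ring
        rw [h1, ← Finset.mul_sum, hesum]
        ring
      have hti : t i ^ 2 = ‖a i‖ ^ 2 := rfl
      linarith [herase, hsum2 ▸ herase]
    have hexp : ∑ i, (t i ^ 2 - c * (t i * (T - t i))) = lam - c * (T ^ 2 - lam) := by
      have h1 : ∑ i, t i ^ 2 = lam := hlamR.symm
      have h2 : ∑ i, (t i * (T - t i)) = T ^ 2 - lam := by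
        have h3 : ∑ i, (t i * (T - t i)) = ∑ i, (t i * T - t i ^ 2) :=
          Finset.sum_congr rfl fun i _ => by ring
        rw [h3, Finset.sum_sub_distrib, ← Finset.sum_mul, ← hT', h1]
        ring
      rw [Finset.sum_sub_distrib, ← Finset.mul_sum, h1, h2]
    have hsumle := Finset.sum_le_sum (fun i (_ : i ∈ Finset.univ) => hstep i)
    rw [hexp] at hsumle
    rw [hre]
    calc lam - c * (T ^ 2 - lam) ≤ ∑ i, ∑ j, (f i j).re := hsumle
      _ = ∑ i, ∑ j, (f i j).re := rfl
  -- conclude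
  have hNR : (2 : ℝ) ≤ (N : ℝ) := by exact_mod_cast hN
  have hcnn : 0 ≤ c := by rw [hc']; nlinarith
  have hfinal1 : 1 - c * ((N : ℝ) - 1) ≤ lam := by
    have hTlam : T ^ 2 - lam ≤ ((N : ℝ) - 1) * lam := by linarith [hsq]
    have h2 : lam * (1 - c * ((N : ℝ) - 1)) ≤ lam * lam := by
      have h3 := mul_le_mul_of_nonneg_left hTlam hcnn
      nlinarith [hmain]
    exact (mul_le_mul_iff_right₀ hlampos).mp (by nlinarith [h2])
  have hε1 : ε ≤ 1 := by nlinarith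
  have hfinal2 : 1 - (N : ℝ) ^ 2 * ε ≤ 1 - c * ((N : ℝ) - 1) := by
    rw [hc']
    nlinarith [mul_nonneg (mul_nonneg (show (0:ℝ) ≤ (N : ℝ) - 1 by linarith) hε)
        (show (0:ℝ) ≤ 1 - ε by linarith),
      mul_nonneg hε (show (0:ℝ) ≤ ((N : ℝ) - 1) * ((N : ℝ) - 2) by nlinarith)]
  linarith

theorem stmt_7 {d N : ℕ} (hN : 2 ≤ N) (ε : ℝ) (hε : 0 ≤ ε)
    (hNε : (N : ℝ) ^ 2 * ε < 1)
    (ψ e : Fin N → (Fin d → ℂ))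
    (hψ : ∀ i, star (ψ i) ⬝ᵥ ψ i = 1)
    (he : ∀ i j, star (e i) ⬝ᵥ e j = if i = j then 1 else 0)
    -- `‖ψᵢψᵢ* − eᵢeᵢ*‖ ≤ ε` in the ℓ² → ℓ² operator norm
    (hclose : ∀ i, ∀ u : EuclideanSpace ℂ (Fin d),
      ‖Matrix.toEuclideanLin
          (Matrix.vecMulVec (ψ i) (star (ψ i)) - Matrix.vecMulVec (e i) (star (e i))) u‖
        ≤ ε * ‖u‖)
    (W : Matrix (Fin d) (Fin d) ℂ)
    (hW : W = ∑ i, Matrix.vecMulVec (ψ i) (star (ψ i))) (hWh : W.IsHermitian) :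
    (∀ i, hWh.eigenvalues i ≤ 1 + N * ε) ∧
    (∀ i, hWh.eigenvalues i ≠ 0 → 1 - (N : ℝ) ^ 2 * ε ≤ hWh.eigenvalues i) ∧
    (⨆ i, hWh.eigenvalues i) / sInf {x : ℝ | 0 < x ∧ ∃ i, hWh.eigenvalues i = x}
      ≤ (1 + N * ε) / (1 - (N : ℝ) ^ 2 * ε) ∧
    (ε = 1 / (2 * (N : ℝ) ^ 2) →
      (⨆ i, hWh.eigenvalues i) / sInf {x : ℝ | 0 < x ∧ ∃ i, hWh.eigenvalues i = x} ≤ 3) := by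
  have hNR : (2 : ℝ) ≤ (N : ℝ) := by exact_mod_cast hN
  have hkey : ∀ i, hWh.eigenvalues i ≤ 1 + N * ε ∧
      (hWh.eigenvalues i ≠ 0 → 1 - (N : ℝ) ^ 2 * ε ≤ hWh.eigenvalues i) := by
    intro i
    exact key hN ε hε hNε ψ e hψ he hclose W hW (hWh.eigenvectorBasis i)
      (hWh.eigenvectorBasis.orthonormal.1 i) (hWh.eigenvalues i)
      (hWh.mulVec_eigenvectorBasis i)
  have hposd : (0 : ℝ) < 1 - (N : ℝ) ^ 2 * ε := by linarith
  have hubnn : (0 : ℝ) ≤ 1 + N * ε := by positivity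
  have hsup : (⨆ i, hWh.eigenvalues i) ≤ 1 + N * ε :=
    Real.iSup_le (fun i => (hkey i).1) hubnn
  have hpart3 : (⨆ i, hWh.eigenvalues i) /
      sInf {x : ℝ | 0 < x ∧ ∃ i, hWh.eigenvalues i = x}
      ≤ (1 + N * ε) / (1 - (N : ℝ) ^ 2 * ε) := by
    by_cases hS : {x : ℝ | 0 < x ∧ ∃ i, hWh.eigenvalues i = x}.Nonempty
    · have hinf : 1 - (N : ℝ) ^ 2 * ε ≤ sInf {x : ℝ | 0 < x ∧ ∃ i, hWh.eigenvalues i = x} := by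
        refine le_csInf hS ?_
        rintro x ⟨hx, i, hi⟩
        exact hi ▸ (hkey i).2 (by rw [hi]; exact ne_of_gt hx)
      exact div_le_div₀ hubnn hsup hposd hinf
    · rw [Set.not_nonempty_iff_eq_empty.mp hS, Real.sInf_empty, div_zero]
      positivity
  refine ⟨fun i => (hkey i).1, fun i => (hkey i).2, hpart3, fun hεeq => ?_⟩
  have hN0 : (0 : ℝ) < (N : ℝ) := by linarith
  refine le_trans hpart3 ?_
  rw [hεeq]
  have hsq : (N : ℝ) ^ 2 * (1 / (2 * (N : ℝ) ^ 2)) = 1 / 2 := by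
    rw [mul_one_div]
    rw [div_eq_div_iff (by positivity) (by norm_num)]
    ring
  have hlin : (N : ℝ) * (1 / (2 * (N : ℝ) ^ 2)) ≤ 1 / 2 := by
    rw [mul_one_div, div_le_div_iff₀ (by positivity) (by norm_num)]
    nlinarith
  rw [hsq]
  rw [div_le_iff₀ (by norm_num : (0:ℝ) < 1 - 1/2)]
  linarith
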